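/- arXiv:2002.00395 — 3 statements merged into one kernel-verified Lean document; each statement's English description precedes it below -/
import Mathlib

section
/- Let φ ∈ C(ℝ, Y) and ψ ∈ C(ℝ, X), where (Y, ρ) and (X, γ) are complete metric spaces. If 𝔐_ψ ⊆ 𝔐_φ (where 𝔐_f denotes the set of real sequences {tₙ} such that the translates f^{tₙ} converge in the compact-open topology), then 𝔑_ψ ⊆ 𝔑_φ (where 𝔑_f denotes the set of sequences {tₙ} such that f^{tₙ} → f in the compact-open topology). In other words, strong comparability by character of recurrence implies comparability. -/
open Set Filter Topology

/-- `{tₙ} ∈ 𝔐_f`: the translates `f^{tₙ}` converge uniformly on every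
compact interval to some limit. -/
def memM {Z : Type*} [MetricSpace Z] (f : ℝ → Z) (t : ℕ → ℝ) : Prop :=
  ∃ g : ℝ → Z, ∀ k > (0:ℝ),
    TendstoUniformlyOn (fun n s => f (s + t n)) g atTop (Icc (-k) k)

/-- `{tₙ} ∈ 𝔑_f`: the translates `f^{tₙ}` converge to `f` uniformly on every
compact interval. -/
def memN {Z : Type*} [MetricSpace Z] (f : ℝ → Z) (t : ℕ → ℝ) : Prop :=
  ∀ k > (0:ℝ),
    TendstoUniformlyOn (fun n s => f (s + t n)) f atTop (Icc (-k) k)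

theorem stmt5 {Y X : Type*} [MetricSpace Y] [CompleteSpace Y]
    [MetricSpace X] [CompleteSpace X]
    (φ : ℝ → Y) (ψ : ℝ → X) (hφ : Continuous φ) (hψ : Continuous ψ)
    (h : ∀ t : ℕ → ℝ, memM ψ t → memM φ t) :
    ∀ t : ℕ → ℝ, memN ψ t → memN φ t := by
  intro t ht
  -- interleave t with the zero sequence
  set s : ℕ → ℝ := fun n => if Even n then t (n / 2) else 0 with hs
  have hsM : memM ψ s := by
    refine ⟨ψ, fun k hk => ?_⟩
    rw [Metric.tendstoUniformlyOn_iff]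
    intro ε hε
    obtain ⟨N, hN⟩ := ((Metric.tendstoUniformlyOn_iff).mp (ht k hk) ε hε).exists_forall_of_atTop
    rw [eventually_atTop]
    refine ⟨2 * N, fun n hn x hx => ?_⟩
    by_cases he : Even n
    · have : s n = t (n / 2) := by simp [hs, he]
      rw [this]
      exact hN (n / 2) (by omega) x hx
    · have : s n = 0 := by simp [hs, he]
      rw [this, add_zero]
      simpa using hε
  obtain ⟨g, hg⟩ := h s hsM
  -- g = φ, via odd indices
  have hgφ : ∀ x : ℝ, g x = φ x := by
    intro x
    refine eq_of_forall_dist_le fun ε hε => ?_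
    have hk : (0:ℝ) < |x| + 1 := by positivity
    have hx : x ∈ Icc (-(|x| + 1)) (|x| + 1) := by
      constructor <;> [linarith [neg_abs_le x]; linarith [le_abs_self x]]
    obtain ⟨N, hN⟩ :=
      ((Metric.tendstoUniformlyOn_iff).mp (hg _ hk) ε hε).exists_forall_of_atTop
    have hodd : ¬ Even (2 * N + 1) := by simp [Nat.even_add_one, parity_simps]
    have := hN (2 * N + 1) (by omega) x hx
    rw [show s (2 * N + 1) = 0 by simp [hs, hodd], add_zero] at this
    exact this.le
  -- now extract even indices
  intro k hk
  rw [Metric.tendstoUniformlyOn_iff]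
  intro ε hε
  obtain ⟨N, hN⟩ := ((Metric.tendstoUniformlyOn_iff).mp (hg k hk) ε hε).exists_forall_of_atTop
  rw [eventually_atTop]
  refine ⟨N, fun n hn x hx => ?_⟩
  have := hN (2 * n) (by omega) x hx
  rw [show s (2 * n) = t n by simp [hs], hgφ x] at this
  exact this
end

section
/- Let u, f : ℝ → [0, ∞) be bounded continuous functions and let ω > a ≥ 0. If u(t) ≤ ∫_{-∞}^t e^{-ω(t-τ)} ( a·u(τ) + f(τ) ) dτ for all t ∈ ℝ, then u(t) ≤ ∫_{-∞}^t e^{-α(t-τ)} f(τ) dτ for all t ∈ ℝ, where α := ω - a. -/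
open Set MeasureTheory Real Filter Topology

lemma aux_interval_exp {b : ℝ} (hb : b ≠ 0) (y t : ℝ) :
    ∫ τ in y..t, exp (b * τ) = (exp (b * t) - exp (b * y)) / b := by
  rw [intervalIntegral.integral_comp_mul_left exp hb, integral_exp]
  rw [smul_eq_mul]; ring

lemma aux_integrableOn {b : ℝ} (hb : 0 < b) (t : ℝ) :
    IntegrableOn (fun τ : ℝ => exp (b * τ)) (Iic t) := by
  refine integrableOn_Iic_of_intervalIntegral_norm_bounded (exp (b * t) / b) t
    (fun y => ((continuous_exp.comp (continuous_const.mul continuous_id)).integrableOn_Ioc))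
    tendsto_id ?_
  filter_upwards [eventually_le_atBot t] with y hy
  have : ∫ τ in y..t, ‖exp (b * τ)‖ = (exp (b * t) - exp (b * y)) / b := by
    simp_rw [Real.norm_eq_abs, abs_of_pos (exp_pos _)]
    exact aux_interval_exp hb.ne' y t
  simp only [id_eq]
  rw [this]
  have := (exp_pos (b * y)).le
  have hbb := hb
  gcongr
  linarith

lemma aux_integral {b : ℝ} (hb : 0 < b) (t : ℝ) :
    ∫ τ in Iic t, exp (b * τ) = exp (b * t) / b := by
  refine tendsto_nhds_unique
    (intervalIntegral_tendsto_integral_Iic t (aux_integrableOn hb t) tendsto_id) ?_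
  have : Tendsto (fun y : ℝ => (exp (b * t) - exp (b * y)) / b) atBot
      (𝓝 ((exp (b * t) - 0) / b)) := by
    refine Tendsto.div_const ?_ b
    exact (tendsto_exp_atBot.comp (tendsto_id.const_mul_atBot hb)).const_sub _
  rw [sub_zero] at this
  refine this.congr fun y => (aux_interval_exp hb.ne' y t).symm

theorem stmt8 (u f : ℝ → ℝ) (ω a : ℝ)
    (hu_cont : Continuous u) (hf_cont : Continuous f)
    (hu_nonneg : ∀ t, 0 ≤ u t) (hf_nonneg : ∀ t, 0 ≤ f t)
    (hu_bdd : ∃ M, ∀ t, u t ≤ M) (hf_bdd : ∃ M, ∀ t, f t ≤ M)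
    (ha : 0 ≤ a) (hωa : a < ω)
    (hineq : ∀ t : ℝ,
      u t ≤ ∫ τ in Iic t, exp (-ω * (t - τ)) * (a * u τ + f τ)) :
    ∀ t : ℝ, u t ≤ ∫ τ in Iic t, exp (-(ω - a) * (t - τ)) * f τ := by
  obtain ⟨M, hM⟩ := hu_bdd
  obtain ⟨M', hM'⟩ := hf_bdd
  have hM0 : 0 ≤ M := (hu_nonneg 0).trans (hM 0)
  have hM'0 : 0 ≤ M' := (hf_nonneg 0).trans (hM' 0)
  set b : ℝ := ω - a with hbdef
  have hbpos : 0 < b := by simp only [hbdef]; linarith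
  have hωpos : 0 < ω := lt_of_le_of_lt ha hωa
  set g : ℝ → ℝ := fun τ => exp (ω * τ) * (a * u τ + f τ) with hgdef
  set h : ℝ → ℝ := fun τ => exp (b * τ) * f τ with hhdef
  have hg_cont : Continuous g := by
    exact (continuous_exp.comp (continuous_const.mul continuous_id)).mul
      ((continuous_const.mul hu_cont).add hf_cont)
  have hh_cont : Continuous h := by
    exact (continuous_exp.comp (continuous_const.mul continuous_id)).mul hf_cont
  have hg_bd : ∀ τ, ‖g τ‖ ≤ (a * M + M') * exp (ω * τ) := by
    intro τ
    have h1 : 0 ≤ a * u τ + f τ := by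
      have := mul_nonneg ha (hu_nonneg τ); linarith [hf_nonneg τ]
    rw [norm_of_nonneg (mul_nonneg (exp_pos _).le h1)]
    have h2 : a * u τ + f τ ≤ a * M + M' := by
      have := mul_le_mul_of_nonneg_left (hM τ) ha
      linarith [hM' τ]
    calc exp (ω * τ) * (a * u τ + f τ) ≤ exp (ω * τ) * (a * M + M') :=
          mul_le_mul_of_nonneg_left h2 (exp_pos _).le
      _ = (a * M + M') * exp (ω * τ) := by ring
  have hh_bd : ∀ τ, ‖h τ‖ ≤ M' * exp (b * τ) := by
    intro τ
    rw [norm_of_nonneg (mul_nonneg (exp_pos _).le (hf_nonneg τ))]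
    calc exp (b * τ) * f τ ≤ exp (b * τ) * M' :=
          mul_le_mul_of_nonneg_left (hM' τ) (exp_pos _).le
      _ = M' * exp (b * τ) := by ring
  have hg_int : ∀ t, IntegrableOn g (Iic t) := fun t =>
    Integrable.mono' ((aux_integrableOn hωpos t).const_mul (a * M + M'))
      hg_cont.aestronglyMeasurable (ae_of_all _ fun τ => hg_bd τ)
  have hh_int : ∀ t, IntegrableOn h (Iic t) := fun t =>
    Integrable.mono' ((aux_integrableOn hbpos t).const_mul M')
      hh_cont.aestronglyMeasurable (ae_of_all _ fun τ => hh_bd τ)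
  set v : ℝ → ℝ := fun t => exp (-ω * t) * ∫ τ in Iic t, g τ with hvdef
  set r : ℝ → ℝ := fun t => exp (-b * t) * ∫ τ in Iic t, h τ with hrdef
  -- the hypothesis says u ≤ v
  have huv : ∀ t, u t ≤ v t := by
    intro t
    have : (∫ τ in Iic t, exp (-ω * (t - τ)) * (a * u τ + f τ)) = v t := by
      rw [hvdef]
      dsimp only
      rw [← integral_const_mul]
      refine setIntegral_congr_fun measurableSet_Iic fun τ _ => ?_
      show exp (-ω * (t - τ)) * (a * u τ + f τ) = exp (-ω * t) * g τ
      rw [hgdef]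
      rw [show -ω * (t - τ) = -ω * t + ω * τ by ring, exp_add, mul_assoc]
    rw [← this]; exact hineq t
  -- the goal integral equals r
  have hgoal : ∀ t, (∫ τ in Iic t, exp (-(ω - a) * (t - τ)) * f τ) = r t := by
    intro t
    rw [hrdef]
    dsimp only
    rw [← integral_const_mul]
    refine setIntegral_congr_fun measurableSet_Iic fun τ _ => ?_
    show exp (-(ω - a) * (t - τ)) * f τ = exp (-b * t) * h τ
    rw [hhdef]
    rw [show -(ω - a) * (t - τ) = -b * t + b * τ by rw [hbdef]; ring, exp_add, mul_assoc]
  -- derivative of the primitives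
  have hΦ : ∀ t, HasDerivAt (fun s => ∫ τ in Iic s, g τ) (g t) t := by
    intro t
    have heq : ∀ s, ∫ τ in Iic s, g τ = (∫ τ in Iic 0, g τ) + ∫ τ in (0:ℝ)..s, g τ := by
      intro s
      have := intervalIntegral.integral_Iic_sub_Iic (hg_int 0) (hg_int s)
      linarith
    have hder : HasDerivAt (fun s => (∫ τ in Iic 0, g τ) + ∫ τ in (0:ℝ)..s, g τ) (g t) t := by
      refine HasDerivAt.const_add _ ?_
      exact intervalIntegral.integral_hasDerivAt_right (hg_cont.intervalIntegrable 0 t)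
        (hg_cont.stronglyMeasurableAtFilter _ _) hg_cont.continuousAt
    simpa only [← heq] using hder
  have hΨ : ∀ t, HasDerivAt (fun s => ∫ τ in Iic s, h τ) (h t) t := by
    intro t
    have heq : ∀ s, ∫ τ in Iic s, h τ = (∫ τ in Iic 0, h τ) + ∫ τ in (0:ℝ)..s, h τ := by
      intro s
      have := intervalIntegral.integral_Iic_sub_Iic (hh_int 0) (hh_int s)
      linarith
    have hder : HasDerivAt (fun s => (∫ τ in Iic 0, h τ) + ∫ τ in (0:ℝ)..s, h τ) (h t) t := by
      refine HasDerivAt.const_add _ ?_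
      exact intervalIntegral.integral_hasDerivAt_right (hh_cont.intervalIntegrable 0 t)
        (hh_cont.stronglyMeasurableAtFilter _ _) hh_cont.continuousAt
    simpa only [← heq] using hder
  -- derivative of v and r
  have hv : ∀ t, HasDerivAt v (-ω * v t + (a * u t + f t)) t := by
    intro t
    have h1 : HasDerivAt (fun s : ℝ => exp (-ω * s)) (exp (-ω * t) * (-ω)) t := by
      simpa using ((hasDerivAt_id t).const_mul (-ω)).exp
    have h2 := h1.mul (hΦ t)
    have e1 : exp (-ω * t) * g t = a * u t + f t := by
      rw [hgdef]
      show exp (-ω * t) * (exp (ω * t) * (a * u t + f t)) = _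
      rw [← mul_assoc, ← exp_add]
      rw [show -ω * t + ω * t = 0 by ring, exp_zero, one_mul]
    refine h2.congr_deriv ?_
    rw [hvdef, e1]; ring
  have hr : ∀ t, HasDerivAt r (-b * r t + f t) t := by
    intro t
    have h1 : HasDerivAt (fun s : ℝ => exp (-b * s)) (exp (-b * t) * (-b)) t := by
      simpa using ((hasDerivAt_id t).const_mul (-b)).exp
    have h2 := h1.mul (hΨ t)
    have e1 : exp (-b * t) * h t = f t := by
      rw [hhdef]
      show exp (-b * t) * (exp (b * t) * f t) = _
      rw [← mul_assoc, ← exp_add]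
      rw [show -b * t + b * t = 0 by ring, exp_zero, one_mul]
    refine h2.congr_deriv ?_
    rw [hrdef, e1]; ring
  -- bound on v and nonnegativity of r
  set C : ℝ := (a * M + M') / ω with hCdef
  have hvC : ∀ s, v s ≤ C := by
    intro s
    have hint : (∫ τ in Iic s, g τ) ≤ ∫ τ in Iic s, (a * M + M') * exp (ω * τ) := by
      refine integral_mono (hg_int s) ((aux_integrableOn hωpos s).const_mul _) fun τ => ?_
      have := hg_bd τ
      calc g τ ≤ ‖g τ‖ := le_abs_self _
        _ ≤ (a * M + M') * exp (ω * τ) := this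
    have hval : (∫ τ in Iic s, (a * M + M') * exp (ω * τ)) = (a * M + M') * (exp (ω * s) / ω) := by
      rw [integral_const_mul, aux_integral hωpos]
    rw [hvdef]
    show exp (-ω * s) * (∫ τ in Iic s, g τ) ≤ C
    calc exp (-ω * s) * (∫ τ in Iic s, g τ)
        ≤ exp (-ω * s) * ((a * M + M') * (exp (ω * s) / ω)) := by
          refine mul_le_mul_of_nonneg_left ?_ (exp_pos _).le
          rw [← hval]; exact hint
      _ = (exp (-ω * s) * exp (ω * s)) * ((a * M + M') / ω) := by ring
      _ = C := by rw [← exp_add, show -ω * s + ω * s = 0 by ring, exp_zero, one_mul, hCdef]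
  have hr0 : ∀ s, 0 ≤ r s := by
    intro s
    refine mul_nonneg (exp_pos _).le ?_
    refine setIntegral_nonneg measurableSet_Iic fun τ _ => ?_
    exact mul_nonneg (exp_pos _).le (hf_nonneg τ)
  -- main argument: H s = (v s - r s) * exp (b s) is antitone
  set H : ℝ → ℝ := fun s => (v s - r s) * exp (b * s) with hHdef
  have hH : ∀ s, HasDerivAt H ((a * u s - a * v s) * exp (b * s)) s := by
    intro s
    have hexp : HasDerivAt (fun s : ℝ => exp (b * s)) (exp (b * s) * b) s := by
      simpa using ((hasDerivAt_id s).const_mul b).exp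
    have h2 := ((hv s).sub (hr s)).mul hexp
    refine h2.congr_deriv ?_
    simp only [hbdef, Pi.sub_apply]
    ring
  have hH_deriv_nonpos : ∀ s, deriv H s ≤ 0 := by
    intro s
    rw [(hH s).deriv]
    refine mul_nonpos_of_nonpos_of_nonneg ?_ (exp_pos _).le
    have := mul_le_mul_of_nonneg_left (huv s) ha
    linarith
  have hH_anti : Antitone H :=
    antitone_of_deriv_nonpos (fun s => (hH s).differentiableAt) hH_deriv_nonpos
  intro t
  rw [hgoal t]
  refine (huv t).trans ?_
  -- show v t ≤ r t
  have hkey : ∀ T, T ≤ t → H t ≤ C * exp (b * T) := by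
    intro T hT
    refine (hH_anti hT).trans ?_
    rw [hHdef]
    show (v T - r T) * exp (b * T) ≤ C * exp (b * T)
    refine mul_le_mul_of_nonneg_right ?_ (exp_pos _).le
    have := hvC T; have := hr0 T; linarith
  have htend : Tendsto (fun T : ℝ => C * exp (b * T)) atBot (𝓝 0) := by
    have : Tendsto (fun T : ℝ => exp (b * T)) atBot (𝓝 0) :=
      tendsto_exp_atBot.comp (tendsto_id.const_mul_atBot hbpos)
    simpa using this.const_mul C
  have hHt : H t ≤ 0 := by
    refine ge_of_tendsto htend ?_
    filter_upwards [eventually_le_atBot t] with T hT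
    exact hkey T hT
  have : (v t - r t) * exp (b * t) ≤ 0 := hHt
  nlinarith [exp_pos (b * t)]
end

section
/- Let u, f : ℝ → [0, ∞) be bounded continuous and ω > a ≥ 0, with α := ω - a. Suppose u(t) ≤ ∫_{-∞}^t e^{-ω(t-τ)}( a·u(τ) + f(τ) ) dτ for all t ∈ ℝ. Then for all l > k > 0: max_{|t|≤k} u(t) ≤ (e^{αk} e^{-αl}/α) · sup_{t∈ℝ} f(t) + ((1 - e^{-αk}e^{-αl})/α) · max_{|t|≤l} f(t). -/
open Set MeasureTheory Real Filter intervalIntegral Topology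

lemma stmt9_intExp (c p q : ℝ) : c * ∫ x in p..q, exp (c * x) = exp (c * q) - exp (c * p) := by
  rcases eq_or_ne c 0 with hc | hc
  · simp [hc]
  · rw [intervalIntegral.integral_comp_mul_left (fun x => exp x) hc, integral_exp,
      smul_eq_mul]
    field_simp

lemma stmt9_intExp' {c : ℝ} (hc : c ≠ 0) (p q : ℝ) :
    ∫ x in p..q, exp (c * x) = (exp (c * q) - exp (c * p)) / c := by
  rw [eq_div_iff hc]
  linear_combination stmt9_intExp c p q

lemma stmt9_intOnExp {c : ℝ} (hc : 0 < c) (b : ℝ) :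
    IntegrableOn (fun x => exp (c * x)) (Iic b) := by
  refine integrableOn_Iic_of_intervalIntegral_norm_bounded (exp (c * b) / c) b
    (fun y => (continuous_exp.comp (continuous_const.mul continuous_id)).integrableOn_Ioc)
    tendsto_id (Eventually.of_forall fun y => ?_)
  have h1 : ∀ x : ℝ, ‖exp (c * x)‖ = exp (c * x) := fun x => norm_of_nonneg (exp_pos _).le
  simp_rw [h1, id_eq, stmt9_intExp' hc.ne']
  have h3 : (0:ℝ) < exp (c * y) := exp_pos _
  gcongr
  linarith

lemma stmt9_intIicExp {c : ℝ} (hc : 0 < c) (b : ℝ) :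
    ∫ x in Iic b, exp (c * x) = exp (c * b) / c := by
  refine tendsto_nhds_unique
    (intervalIntegral_tendsto_integral_Iic b (stmt9_intOnExp hc b) tendsto_id) ?_
  simp_rw [id_eq, stmt9_intExp' hc.ne']
  have hlim : Tendsto (fun y : ℝ => exp (c * y)) atBot (𝓝 0) := by
    apply tendsto_exp_atBot.comp
    exact (tendsto_const_mul_atBot_of_pos hc).mpr tendsto_id
  have := ((tendsto_const_nhds (x := exp (c*b))).sub hlim).div_const c
  simpa using this

lemma stmt9_Jb {ω : ℝ} (hω : 0 < ω) (s b : ℝ) :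
    ∫ τ in Iic b, exp (-ω * (s - τ)) = exp (-ω * (s - b)) / ω := by
  have h : ∀ τ : ℝ, exp (-ω * (s - τ)) = exp (-(ω * s)) * exp (ω * τ) := by
    intro τ; rw [← exp_add]; ring_nf
  simp_rw [h]
  rw [MeasureTheory.integral_const_mul, stmt9_intIicExp hω b, ← mul_div_assoc, ← exp_add]

lemma stmt9_intOnAux {ω : ℝ} (hω : 0 < ω) (s b : ℝ) {h : ℝ → ℝ} (hc : Continuous h)
    {C : ℝ} (hbd : ∀ τ, |h τ| ≤ C) :
    IntegrableOn (fun τ => exp (-ω * (s - τ)) * h τ) (Iic b) := by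
  apply Integrable.mono' (g := fun τ => (exp (-(ω * s)) * C) * exp (ω * τ))
    ((stmt9_intOnExp hω b).const_mul _)
    (Continuous.aestronglyMeasurable (by fun_prop))
  refine Filter.Eventually.of_forall fun τ => ?_
  have hn : ‖exp (-ω * (s - τ)) * h τ‖ = exp (-ω * (s - τ)) * |h τ| := by
    rw [norm_mul, norm_of_nonneg (exp_pos _).le, Real.norm_eq_abs]
  rw [hn]
  have e : exp (-ω * (s - τ)) = exp (-(ω * s)) * exp (ω * τ) := by rw [← exp_add]; ring_nf
  calc exp (-ω * (s - τ)) * |h τ| ≤ exp (-ω * (s - τ)) * C :=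
        mul_le_mul_of_nonneg_left (hbd τ) (exp_pos _).le
    _ = (exp (-(ω * s)) * C) * exp (ω * τ) := by rw [e]; ring

set_option maxHeartbeats 800000 in
theorem stmt9 (u f : ℝ → ℝ) (ω a : ℝ)
    (hu_cont : Continuous u) (hf_cont : Continuous f)
    (hu_nonneg : ∀ t, 0 ≤ u t) (hf_nonneg : ∀ t, 0 ≤ f t)
    (hu_bdd : ∃ M, ∀ t, u t ≤ M) (hf_bdd : ∃ M, ∀ t, f t ≤ M)
    (ha : 0 ≤ a) (hωa : a < ω)
    (hineq : ∀ t : ℝ,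
      u t ≤ ∫ τ in Iic t, exp (-ω * (t - τ)) * (a * u τ + f τ)) :
    ∀ l k : ℝ, 0 < k → k < l → ∀ t : ℝ, |t| ≤ k →
      u t ≤ exp ((ω - a) * k) * exp (-(ω - a) * l) / (ω - a) * sSup (range f)
          + (1 - exp (-(ω - a) * k) * exp (-(ω - a) * l)) / (ω - a)
            * sSup (f '' Icc (-l) l) := by
  obtain ⟨Mu, hMu⟩ := hu_bdd
  obtain ⟨Mf, hMf⟩ := hf_bdd
  intro l k hk hkl t ht
  set α := ω - a with hαdef
  have hα : 0 < α := by rw [hαdef]; linarith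
  have hω : 0 < ω := lt_of_le_of_lt ha hωa
  set F := sSup (range f) with hFdef
  set Fl := sSup (f '' Icc (-l) l) with hFldef
  have bddF : BddAbove (range f) := ⟨Mf, by rintro x ⟨s, rfl⟩; exact hMf s⟩
  have hF : ∀ s, f s ≤ F := fun s => le_csSup bddF ⟨s, rfl⟩
  have hl0 : (0:ℝ) < l := hk.trans hkl
  have h0mem : (0:ℝ) ∈ Icc (-l) l := by constructor <;> linarith
  have bddFl : BddAbove (f '' Icc (-l) l) := ⟨Mf, by rintro x ⟨s, _, rfl⟩; exact hMf s⟩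
  have hFl : ∀ s, s ∈ Icc (-l) l → f s ≤ Fl := fun s hs => le_csSup bddFl ⟨s, hs, rfl⟩
  have hFl0 : 0 ≤ Fl := le_trans (hf_nonneg 0) (hFl 0 h0mem)
  have hF0 : 0 ≤ F := le_trans (hf_nonneg 0) (hF 0)
  have hFlF : Fl ≤ F := csSup_le_csSup bddF ⟨f 0, 0, h0mem, rfl⟩ (image_subset_range f _)
  clear_value α F Fl
  set Φ : ℝ → ℝ := fun s => Fl / α + (F - Fl) / α * exp (-(α * max (s + l) 0)) with hΦdef
  clear_value Φ
  have hcoef : 0 ≤ (F - Fl) / α := div_nonneg (by linarith) hα.le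
  have hΦcont : Continuous Φ := by
    rw [hΦdef]; fun_prop
  have hsum : Fl / α + (F - Fl) / α = F / α := by ring
  have hΦub : ∀ s, Φ s ≤ F / α := by
    intro s
    have h1 : exp (-(α * max (s + l) 0)) ≤ 1 := by
      rw [exp_le_one_iff]
      have := mul_nonneg hα.le (le_max_right (s + l) (0:ℝ))
      linarith
    have h2 := mul_le_of_le_one_right hcoef h1
    simp only [hΦdef]
    linarith
  have hΦnn : ∀ s, 0 ≤ Φ s := by
    intro s
    simp only [hΦdef]
    have := mul_nonneg hcoef (exp_pos (-(α * max (s + l) 0))).le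
    have := div_nonneg hFl0 hα.le
    linarith
  have hCb : ∀ τ, |a * Φ τ + f τ| ≤ a * (F / α) + F := by
    intro τ
    rw [abs_of_nonneg (add_nonneg (mul_nonneg ha (hΦnn τ)) (hf_nonneg τ))]
    have := mul_le_mul_of_nonneg_left (hΦub τ) ha
    linarith [hF τ]
  have hωeq : ω = a + α := by rw [hαdef]; ring
  have keyid : a * (F / α) + F = ω * (F / α) := by
    rw [hωeq]; field_simp
  have hΦint : ∀ s b : ℝ,
      IntegrableOn (fun τ => exp (-ω * (s - τ)) * (a * Φ τ + f τ)) (Iic b) := by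
    intro s b
    exact stmt9_intOnAux hω s b ((continuous_const.mul hΦcont).add hf_cont) hCb
  have bound1 : ∀ s b : ℝ, (∫ τ in Iic b, exp (-ω * (s - τ)) * (a * Φ τ + f τ))
      ≤ F / α * exp (-ω * (s - b)) := by
    intro s b
    have int2 : IntegrableOn (fun τ => exp (-ω * (s - τ)) * (ω * (F / α))) (Iic b) :=
      stmt9_intOnAux hω s b continuous_const (fun τ => le_refl _)
    have hcomm : ∀ τ : ℝ, exp (-ω * (s - τ)) * (ω * (F / α))
        = (ω * (F / α)) * exp (-ω * (s - τ)) := fun τ => mul_comm _ _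
    calc (∫ τ in Iic b, exp (-ω * (s - τ)) * (a * Φ τ + f τ))
        ≤ ∫ τ in Iic b, exp (-ω * (s - τ)) * (ω * (F / α)) := by
          apply setIntegral_mono_on (hΦint s b) int2 measurableSet_Iic
          intro τ _
          apply mul_le_mul_of_nonneg_left ?_ (exp_pos _).le
          have := mul_le_mul_of_nonneg_left (hΦub τ) ha
          linarith [hF τ]
      _ = (ω * (F / α)) * ∫ τ in Iic b, exp (-ω * (s - τ)) := by
          simp_rw [hcomm]
          rw [MeasureTheory.integral_const_mul]
      _ = F / α * exp (-ω * (s - b)) := by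
          rw [stmt9_Jb hω s b]; field_simp
  have key : ∀ s, s ≤ l → (∫ τ in Iic s, exp (-ω * (s - τ)) * (a * Φ τ + f τ)) ≤ Φ s := by
    intro s hs
    rcases le_or_gt s (-l) with h1 | h1
    · have hmax : max (s + l) 0 = 0 := max_eq_right (by linarith)
      have hΦs : Φ s = F / α := by
        simp only [hΦdef, hmax, mul_zero, neg_zero, exp_zero, mul_one]; ring
      calc (∫ τ in Iic s, exp (-ω * (s - τ)) * (a * Φ τ + f τ))
          ≤ F / α * exp (-ω * (s - s)) := bound1 s s
        _ = F / α := by simp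
        _ = Φ s := hΦs.symm
    · have hls : -l ≤ s := h1.le
      set G : ℝ → ℝ := fun τ => Fl / α * exp (ω * τ - ω * s)
          + (F - Fl) / α * exp (a * τ - (ω * s + α * l)) with hGdef
      clear_value G
      set r : ℝ → ℝ := fun τ => Fl / α * (ω * exp (ω * τ - ω * s))
          + (F - Fl) / α * (a * exp (a * τ - (ω * s + α * l))) with hrdef
      clear_value r
      have hG : ∀ τ : ℝ, HasDerivAt G (r τ) τ := by
        intro τ
        rw [hGdef, hrdef]
        have d1 : HasDerivAt (fun x : ℝ => ω * x - ω * s) ω τ := by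
          simpa using ((hasDerivAt_id τ).const_mul ω).sub_const (ω * s)
        have d2 : HasDerivAt (fun x : ℝ => a * x - (ω * s + α * l)) a τ := by
          simpa using ((hasDerivAt_id τ).const_mul a).sub_const (ω * s + α * l)
        have e1 := (Real.hasDerivAt_exp (ω * τ - ω * s)).comp τ d1
        have e2 := (Real.hasDerivAt_exp (a * τ - (ω * s + α * l))).comp τ d2
        have := (e1.const_mul (Fl / α)).add (e2.const_mul ((F - Fl) / α))
        exact this.congr_deriv (by beta_reduce; ring)
      have hrcont : Continuous r := by rw [hrdef]; fun_prop
      have hgcont : Continuous (fun τ => exp (-ω * (s - τ)) * (a * Φ τ + f τ)) := by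
        apply Continuous.mul
        · fun_prop
        · exact (continuous_const.mul hΦcont).add hf_cont
      have split := integral_Iic_sub_Iic (hΦint s (-l)) (hΦint s s)
      have part2eq : ∫ τ in (-l)..s, r τ = G s - G (-l) :=
        intervalIntegral.integral_eq_sub_of_hasDerivAt (fun τ _ => hG τ)
          (hrcont.intervalIntegrable _ _)
      have part2le : (∫ τ in (-l)..s, exp (-ω * (s - τ)) * (a * Φ τ + f τ))
          ≤ ∫ τ in (-l)..s, r τ := by
        apply intervalIntegral.integral_mono_on hls (hgcont.intervalIntegrable _ _)
          (hrcont.intervalIntegrable _ _)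
        intro τ hτ
        obtain ⟨hτ1, hτ2⟩ := hτ
        have hmax : max (τ + l) 0 = τ + l := max_eq_left (by linarith)
        have hfτ : f τ ≤ Fl := hFl τ ⟨by linarith, by linarith⟩
        have hE : exp (-ω * (s - τ)) * exp (-(α * (τ + l))) = exp (a * τ - (ω * s + α * l)) := by
          rw [← exp_add]; congr 1; rw [hωeq]; ring
        have hX : exp (ω * τ - ω * s) = exp (-ω * (s - τ)) := by congr 1; ring
        have step2 : exp (-ω * (s - τ)) * (a * Φ τ + Fl) = r τ := by
          simp only [hrdef, hΦdef, hmax, hX, ← hE]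
          rw [hωeq]
          field_simp
          ring
        calc exp (-ω * (s - τ)) * (a * Φ τ + f τ)
            ≤ exp (-ω * (s - τ)) * (a * Φ τ + Fl) :=
              mul_le_mul_of_nonneg_left (by linarith) (exp_pos _).le
          _ = r τ := step2
      have hmaxs : max (s + l) 0 = s + l := max_eq_left (by linarith)
      have hGs : G s = Fl / α + (F - Fl) / α * exp (-(α * (s + l))) := by
        simp only [hGdef]
        rw [show ω * s - ω * s = 0 by ring, exp_zero,
          show a * s - (ω * s + α * l) = -(α * (s + l)) by rw [hωeq]; ring]
        ring
      have hGl : G (-l) = F / α * exp (-ω * (s - -l)) := by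
        simp only [hGdef]
        rw [show ω * (-l) - ω * s = -ω * (s - -l) by ring,
          show a * (-l) - (ω * s + α * l) = -ω * (s - -l) by rw [hωeq]; ring]
        ring
      have hΦs : Φ s = Fl / α + (F - Fl) / α * exp (-(α * (s + l))) := by
        simp only [hΦdef, hmaxs]
      calc (∫ τ in Iic s, exp (-ω * (s - τ)) * (a * Φ τ + f τ))
          = (∫ τ in Iic (-l), exp (-ω * (s - τ)) * (a * Φ τ + f τ))
            + ∫ τ in (-l)..s, exp (-ω * (s - τ)) * (a * Φ τ + f τ) := by linarith [split]
        _ ≤ F / α * exp (-ω * (s - -l)) + (G s - G (-l)) :=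
            add_le_add (bound1 s (-l)) (part2le.trans_eq part2eq)
        _ = Φ s := by rw [hGs, hGl, hΦs]; ring
  have hC0 : (0:ℝ) ≤ max Mu 0 := le_max_right _ _
  have iter : ∀ n : ℕ, ∀ s, s ≤ l → u s ≤ Φ s + (a / ω) ^ n * max Mu 0 := by
    intro n
    induction n with
    | zero =>
      intro s hs
      simp only [pow_zero, one_mul]
      have := hΦnn s
      have := hMu s
      have := le_max_left Mu (0:ℝ)
      linarith
    | succ n ih =>
      intro s hs
      set c := (a / ω) ^ n * max Mu 0 with hcdef
      clear_value c
      have hc0 : 0 ≤ c := by rw [hcdef]; exact mul_nonneg (pow_nonneg (div_nonneg ha hω.le) n) hC0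
      have intu : IntegrableOn (fun τ => exp (-ω * (s - τ)) * (a * u τ + f τ)) (Iic s) := by
        apply stmt9_intOnAux hω s s ((continuous_const.mul hu_cont).add hf_cont)
          (C := a * Mu + Mf)
        intro τ
        show |a * u τ + f τ| ≤ a * Mu + Mf
        rw [abs_of_nonneg (add_nonneg (mul_nonneg ha (hu_nonneg τ)) (hf_nonneg τ))]
        have := mul_le_mul_of_nonneg_left (hMu τ) ha
        linarith [hMf τ]
      have intc : IntegrableOn (fun τ => exp (-ω * (s - τ)) * (a * c)) (Iic s) :=
        stmt9_intOnAux hω s s continuous_const (fun τ => le_refl _)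
      have hcomm : ∀ τ : ℝ, exp (-ω * (s - τ)) * (a * c)
          = (a * c) * exp (-ω * (s - τ)) := fun τ => mul_comm _ _
      calc u s ≤ ∫ τ in Iic s, exp (-ω * (s - τ)) * (a * u τ + f τ) := hineq s
        _ ≤ ∫ τ in Iic s, (exp (-ω * (s - τ)) * (a * Φ τ + f τ)
              + exp (-ω * (s - τ)) * (a * c)) := by
            have intsum : IntegrableOn (fun τ => exp (-ω * (s - τ)) * (a * Φ τ + f τ)
                + exp (-ω * (s - τ)) * (a * c)) (Iic s) := (hΦint s s).add intc
            apply setIntegral_mono_on intu intsum measurableSet_Iic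
            intro τ hτ
            have hτs : τ ≤ s := hτ
            have hih := ih τ (le_trans hτs hs)
            have h2 : a * u τ + f τ ≤ (a * Φ τ + f τ) + a * c := by
              have := mul_le_mul_of_nonneg_left hih ha
              nlinarith
            calc exp (-ω * (s - τ)) * (a * u τ + f τ)
                ≤ exp (-ω * (s - τ)) * ((a * Φ τ + f τ) + a * c) :=
                  mul_le_mul_of_nonneg_left h2 (exp_pos _).le
              _ = _ := by ring
        _ = (∫ τ in Iic s, exp (-ω * (s - τ)) * (a * Φ τ + f τ))
              + ∫ τ in Iic s, exp (-ω * (s - τ)) * (a * c) :=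
            MeasureTheory.integral_add (hΦint s s) intc
        _ ≤ Φ s + (a * c) * (exp (-ω * (s - s)) / ω) := by
            have e : ∫ τ in Iic s, exp (-ω * (s - τ)) * (a * c)
                = (a * c) * (exp (-ω * (s - s)) / ω) := by
              simp_rw [hcomm]
              rw [MeasureTheory.integral_const_mul, stmt9_Jb hω s s]
            rw [e]
            exact add_le_add_left (key s hs) _
        _ ≤ Φ s + (a / ω) ^ (n + 1) * max Mu 0 := by
            have e2 : (a * c) * (exp (-ω * (s - s)) / ω) = (a / ω) ^ (n + 1) * max Mu 0 := by
              rw [show -ω * (s - s) = 0 by ring, exp_zero, hcdef, pow_succ]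
              field_simp
            rw [e2]
  have htk := abs_le.mp ht
  have htl : t ≤ l := by linarith [htk.2]
  have hulim : u t ≤ Φ t := by
    have hr0 : 0 ≤ a / ω := div_nonneg ha hω.le
    have hr1 : a / ω < 1 := (div_lt_one hω).mpr hωa
    have hten : Filter.Tendsto (fun n : ℕ => Φ t + (a / ω) ^ n * max Mu 0)
        Filter.atTop (nhds (Φ t)) := by
      have := ((tendsto_pow_atTop_nhds_zero_of_lt_one hr0 hr1).mul_const (max Mu 0)).const_add (Φ t)
      simpa using this
    exact ge_of_tendsto' hten fun n => iter n t htl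
  have hmaxt : max (t + l) 0 = t + l := max_eq_left (by linarith [htk.1])
  have hE1 : exp (-(α * (t + l))) ≤ exp (α * k) * exp (-α * l) := by
    rw [← exp_add]
    apply exp_le_exp.mpr
    nlinarith [htk.1, hα]
  have hE2 : exp (-α * k) * exp (-α * l) ≤ exp (α * k) * exp (-α * l) := by
    apply mul_le_mul_of_nonneg_right ?_ (exp_pos _).le
    apply exp_le_exp.mpr
    nlinarith [hk, hα]
  have hΦt : Φ t = Fl / α + (F - Fl) / α * exp (-(α * (t + l))) := by
    simp only [hΦdef, hmaxt]
  have stepB : Φ t ≤ Fl / α + (F - Fl) / α * (exp (α * k) * exp (-α * l)) := by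
    rw [hΦt]
    exact add_le_add_right (mul_le_mul_of_nonneg_left hE1 hcoef) _
  have lhs_eq : Fl / α + (F - Fl) / α * (exp (α * k) * exp (-α * l))
      = (Fl + (F - Fl) * (exp (α * k) * exp (-α * l))) / α := by ring
  have rhs_eq : exp (α * k) * exp (-α * l) / α * F
        + (1 - exp (-α * k) * exp (-α * l)) / α * Fl
      = ((exp (α * k) * exp (-α * l)) * F + (1 - exp (-α * k) * exp (-α * l)) * Fl) / α := by
    ring
  have stepC : (Fl + (F - Fl) * (exp (α * k) * exp (-α * l))) / α
      ≤ ((exp (α * k) * exp (-α * l)) * F + (1 - exp (-α * k) * exp (-α * l)) * Fl) / α := by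
    apply (div_le_div_iff_of_pos_right hα).mpr
    nlinarith [mul_le_mul_of_nonneg_left hE2 hFl0]
  calc u t ≤ Φ t := hulim
    _ ≤ Fl / α + (F - Fl) / α * (exp (α * k) * exp (-α * l)) := stepB
    _ = (Fl + (F - Fl) * (exp (α * k) * exp (-α * l))) / α := lhs_eq
    _ ≤ _ := by rw [rhs_eq]; exact stepC
end
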